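/- Fix a parameter k* ≥ 0 and β > 0, and let G be an n-node graph. For every vertex u of G, the per-vertex sum f_u(G) = Σ_{v ≠ u} val_G({u,v}) satisfies | f_u(G) − d̄_G − (deg_G(u) − d̄_G)·wt_G(u) | ≤ 2·k_G·wt_G(u). -/

import Mathlib

open MeasureTheory Finset
open scoped Classical

noncomputable section

/-- Two `n`-node graphs are node-adjacent if every edge in the symmetric
difference of their edge sets is incident to a single vertex `i`. -/
def NodeAdjacent {n : ℕ} (G G' : SimpleGraph (Fin n)) : Prop :=
  ∃ i : Fin n, ∀ u v : Fin n, ¬ (G.Adj u v ↔ G'.Adj u v) → u = i ∨ v = i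

/-- `G` and `G'` are at node distance at most `c`: there is a path of length `c`
of consecutively node-adjacent graphs from `G` to `G'`. -/
def NodeDistLE {n : ℕ} (G G' : SimpleGraph (Fin n)) (c : ℕ) : Prop :=
  ∃ g : ℕ → SimpleGraph (Fin n), g 0 = G ∧ g c = G' ∧
    ∀ j < c, NodeAdjacent (g j) (g (j + 1))

/-- `(ε,δ)`-node-differential privacy for a randomized algorithm, viewed as a map
assigning to each graph a (probability) measure on the output space `R`. -/
def NodeDP {n : ℕ} {R : Type*} [MeasurableSpace R]
    (A : SimpleGraph (Fin n) → Measure R) (ε δ : ℝ) : Prop :=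
  ∀ G G' : SimpleGraph (Fin n), NodeAdjacent G G' → ∀ S : Set R, MeasurableSet S →
    ((A G) S).toReal ≤ Real.exp ε * ((A G') S).toReal + δ

/-- Number of edges of `G`. -/
def edgeCount {n : ℕ} (G : SimpleGraph (Fin n)) : ℕ := G.edgeSet.ncard

/-- The empirical edge density `p_G = |E| / C(n,2)`. -/
def edgeDensity {n : ℕ} (G : SimpleGraph (Fin n)) : ℝ :=
  (edgeCount G : ℝ) / (n.choose 2 : ℝ)

/-- Degree of a vertex. -/
def deg {n : ℕ} (G : SimpleGraph (Fin n)) (v : Fin n) : ℕ := (G.neighborSet v).ncard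

/-- Average degree `d̄_G = 2|E|/n  ( = (n-1)·p_G )`. -/
def avgDeg {n : ℕ} (G : SimpleGraph (Fin n)) : ℝ := 2 * (edgeCount G : ℝ) / n

/-- `G ∈ 𝒢_{n,k}` : every degree lies in `[d̄ - k, d̄ + k]`. -/
def Concentrated {n : ℕ} (G : SimpleGraph (Fin n)) (k : ℝ) : Prop :=
  ∀ v : Fin n, |(deg G v : ℝ) - avgDeg G| ≤ k

/-- The number of vertices whose degree lies outside `[d̄_G - k* - 3m, d̄_G + k* + 3m]`. -/
def farCount {n : ℕ} (G : SimpleGraph (Fin n)) (kstar : ℝ) (m : ℕ) : ℕ :=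
  {v : Fin n | kstar + 3 * (m : ℝ) < |(deg G v : ℝ) - avgDeg G|}.ncard

/-- `k_G` : the smallest positive integer `m` such that at most `m` vertices have
degree outside `[d̄_G - k* - 3m, d̄_G + k* + 3m]`. -/
def kOf {n : ℕ} (G : SimpleGraph (Fin n)) (kstar : ℝ) : ℕ :=
  sInf {m : ℕ | 0 < m ∧ farCount G kstar m ≤ m}

/-- `t_v` : the distance from `deg_G(v)` to the interval `I_G`. -/
def tDist {n : ℕ} (G : SimpleGraph (Fin n)) (kstar : ℝ) (v : Fin n) : ℝ :=
  max 0 (|(deg G v : ℝ) - avgDeg G| - (kstar + 3 * (kOf G kstar : ℝ)))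

/-- The weight `wt_G(v) = max(0, 1 - β t_v)`. -/
def wt {n : ℕ} (G : SimpleGraph (Fin n)) (kstar β : ℝ) (v : Fin n) : ℝ :=
  max 0 (1 - β * tDist G kstar v)

/-- The value of the pair `{u,v}`:
`val_G({u,v}) = wt_G({u,v})·x_{uv} + (1 - wt_G({u,v}))·p_G`,
where `wt_G({u,v}) = min(wt_G(u), wt_G(v))`. -/
def valPair {n : ℕ} (G : SimpleGraph (Fin n)) (kstar β : ℝ) (u v : Fin n) : ℝ :=
  min (wt G kstar β u) (wt G kstar β v) * (if G.Adj u v then 1 else 0)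
    + (1 - min (wt G kstar β u) (wt G kstar β v)) * edgeDensity G

/-- `f(G)` : the sum of `val_G({u,v})` over unordered pairs of distinct vertices. -/
def fEst {n : ℕ} (G : SimpleGraph (Fin n)) (kstar β : ℝ) : ℝ :=
  (∑ u : Fin n, ∑ v : Fin n, if u ≠ v then valPair G kstar β u v else 0) / 2

/-- `f_u(G) = Σ_{v ≠ u} val_G({u,v})`. -/
def fVert {n : ℕ} (G : SimpleGraph (Fin n)) (kstar β : ℝ) (u : Fin n) : ℝ :=
  ∑ v ∈ Finset.univ.erase u, valPair G kstar β u v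

/-- The smooth upper bound
`S(G) = sup_{ℓ ≥ 0} e^{-βℓ} · C·((k_G+ℓ+k*)(1+β(k_G+ℓ)) + 1/β)`. -/
def smoothS {n : ℕ} (G : SimpleGraph (Fin n)) (kstar β C : ℝ) : ℝ :=
  ⨆ ℓ : {x : ℝ // 0 ≤ x},
    Real.exp (-β * (ℓ : ℝ)) *
      (C * (((kOf G kstar : ℝ) + (ℓ : ℝ) + kstar) * (1 + β * ((kOf G kstar : ℝ) + (ℓ : ℝ))) + 1 / β))

/-- The Student's t-distribution with 3 degrees of freedom, as a measure on `ℝ`. -/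
def studentT3 : Measure ℝ :=
  MeasureTheory.volume.withDensity
    (fun z => ENNReal.ofReal (2 / (Real.sqrt 3 * Real.pi * (1 + z ^ 2 / 3) ^ 2)))

/-- The disjoint union of cliques on `Fin n` given by a block-assignment `π`. -/
def cliqueUnion {n i : ℕ} (π : Fin n → Fin i) : SimpleGraph (Fin n) where
  Adj u v := u ≠ v ∧ π u = π v
  symm := ⟨fun u v h => ⟨Ne.symm h.1, h.2.symm⟩⟩
  loopless := ⟨fun u h => h.1 rfl⟩


private lemma edgeCount_eq_card {n : ℕ} (G : SimpleGraph (Fin n)) :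
    edgeCount G = G.edgeFinset.card := by
  rw [edgeCount, Set.ncard_eq_toFinset_card']
  exact congrArg Finset.card (by ext e; simp)

private lemma edgeDensity_nonneg' {n : ℕ} (G : SimpleGraph (Fin n)) :
    0 ≤ edgeDensity G := by
  rw [edgeDensity]; positivity

private lemma edgeDensity_le_one' {n : ℕ} (G : SimpleGraph (Fin n)) :
    edgeDensity G ≤ 1 := by
  have hle : edgeCount G ≤ n.choose 2 := by
    rw [edgeCount_eq_card]
    have := SimpleGraph.card_edgeFinset_le_card_choose_two (G := G)
    simpa using this
  rw [edgeDensity]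
  rcases Nat.eq_zero_or_pos (n.choose 2) with h | h
  · have : edgeCount G = 0 := by omega
    simp [this]
  · exact div_le_one_of_le₀ (by exact_mod_cast hle) (by positivity)

private lemma deg_eq_degree {n : ℕ} (G : SimpleGraph (Fin n)) (v : Fin n) :
    deg G v = G.degree v := by
  rw [deg, Set.ncard_eq_toFinset_card', Set.toFinset_card]
  exact SimpleGraph.card_neighborSet_eq_degree G v

private lemma cast_pred_mul_density {n : ℕ} (hn : 0 < n) (G : SimpleGraph (Fin n)) :
    ((n - 1 : ℕ) : ℝ) * edgeDensity G = avgDeg G := by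
  rcases Nat.lt_or_ge n 2 with h2 | h2
  · have hn1 : n = 1 := by omega
    subst hn1
    have he : edgeCount G = 0 := by
      rw [edgeCount]
      have : G.edgeSet = ∅ := by
        ext e
        refine e.ind fun a b => ?_
        simp only [SimpleGraph.mem_edgeSet, Set.mem_empty_iff_false, iff_false]
        intro h
        exact (G.ne_of_adj h) (Subsingleton.elim a b)
      simp [this]
    simp [edgeDensity, avgDeg, he]
  · have hn0 : (n : ℝ) ≠ 0 := by positivity
    have hn2 : (2 : ℝ) ≤ (n : ℝ) := by exact_mod_cast h2
    have hn1' : (n : ℝ) - 1 ≠ 0 := by linarith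
    rw [edgeDensity, avgDeg, Nat.cast_sub (by omega), Nat.cast_choose_two]
    push_cast
    field_simp

private lemma farCount_le_n {n : ℕ} (G : SimpleGraph (Fin n)) (kstar : ℝ) (m : ℕ) :
    farCount G kstar m ≤ n := by
  rw [farCount, Set.ncard_eq_toFinset_card', Set.toFinset_setOf]
  calc (Finset.univ.filter _).card ≤ Finset.univ.card := Finset.card_filter_le _ _
    _ = n := by simp

private lemma farCount_kOf_le {n : ℕ} (G : SimpleGraph (Fin n)) (kstar : ℝ) :
    farCount G kstar (kOf G kstar) ≤ kOf G kstar := by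
  have hne : {m : ℕ | 0 < m ∧ farCount G kstar m ≤ m}.Nonempty :=
    ⟨n + 1, Nat.succ_pos n, le_trans (farCount_le_n G kstar _) (Nat.le_succ n)⟩
  exact (Nat.sInf_mem hne).2

private lemma wt_nonneg {n : ℕ} (G : SimpleGraph (Fin n)) (kstar β : ℝ) (v : Fin n) :
    0 ≤ wt G kstar β v := le_max_left _ _

private lemma wt_le_one {n : ℕ} (G : SimpleGraph (Fin n)) (kstar β : ℝ) (hβ : 0 < β)
    (v : Fin n) : wt G kstar β v ≤ 1 := by
  have ht : 0 ≤ tDist G kstar v := le_max_left _ _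
  have : 1 - β * tDist G kstar v ≤ 1 := by nlinarith
  exact max_le (by norm_num) this


/-- the per-vertex sum satisfies
`f_u(G) = d̄_G + (deg_G(u) - d̄_G)·wt_G(u) ± 2 k_G wt_G(u)`. -/
theorem fVert_approx {n : ℕ} (kstar β : ℝ) (hkstar : 0 ≤ kstar) (hβ : 0 < β)
    (G : SimpleGraph (Fin n)) (u : Fin n) :
    |fVert G kstar β u - avgDeg G - ((deg G u : ℝ) - avgDeg G) * wt G kstar β u| ≤
      2 * (kOf G kstar : ℝ) * wt G kstar β u := by
  classical
  have hn : 0 < n := Fin.pos u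
  set p : ℝ := edgeDensity G with hp
  set k : ℕ := kOf G kstar with hkdef
  have hw0 : ∀ v, 0 ≤ wt G kstar β v := wt_nonneg G kstar β
  have hw1 : ∀ v, wt G kstar β v ≤ 1 := wt_le_one G kstar β hβ
  have hp0 : 0 ≤ p := edgeDensity_nonneg' G
  have hp1 : p ≤ 1 := edgeDensity_le_one' G
  -- h1 : sum of p over erase u equals avgDeg
  have h1 : ∑ _v ∈ Finset.univ.erase u, p = avgDeg G := by
    rw [Finset.sum_const, Finset.card_erase_of_mem (Finset.mem_univ u), nsmul_eq_mul]
    simpa using cast_pred_mul_density hn G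
  -- h2 : sum of edge indicators equals degree
  have h2 : ∑ v ∈ Finset.univ.erase u, (if G.Adj u v then (1 : ℝ) else 0)
      = (deg G u : ℝ) := by
    rw [Finset.sum_erase _ (by simp), Finset.sum_boole, deg_eq_degree,
      SimpleGraph.degree, SimpleGraph.neighborFinset_eq_filter]
  -- key identity
  have key : fVert G kstar β u - avgDeg G - ((deg G u : ℝ) - avgDeg G) * wt G kstar β u
      = ∑ v ∈ Finset.univ.erase u,
          (min (wt G kstar β u) (wt G kstar β v) - wt G kstar β u) *
            ((if G.Adj u v then (1 : ℝ) else 0) - p) := by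
    have e1 : ∑ v ∈ Finset.univ.erase u,
        (valPair G kstar β u v - p -
          ((if G.Adj u v then (1 : ℝ) else 0) - p) * wt G kstar β u)
        = fVert G kstar β u - avgDeg G - ((deg G u : ℝ) - avgDeg G) * wt G kstar β u := by
      rw [Finset.sum_sub_distrib, Finset.sum_sub_distrib, ← Finset.sum_mul,
        Finset.sum_sub_distrib, h1, h2, fVert]
    rw [← e1]
    refine Finset.sum_congr rfl fun v _ => ?_
    rw [valPair]
    ring
  rw [key]
  -- the Finset of far vertices
  set Far : Finset (Fin n) :=
    Finset.univ.filter (fun v => kstar + 3 * (k : ℝ) < |(deg G v : ℝ) - avgDeg G|) with hFar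
  have hFarcard : Far.card = farCount G kstar k := by
    rw [farCount, Set.ncard_eq_toFinset_card', Set.toFinset_setOf]
  -- terms vanish outside Far
  have hzero : ∀ v ∈ Finset.univ.erase u, v ∉ Far →
      (min (wt G kstar β u) (wt G kstar β v) - wt G kstar β u) *
        ((if G.Adj u v then (1 : ℝ) else 0) - p) = 0 := by
    intro v _ hv
    have hnotfar : ¬ (kstar + 3 * (k : ℝ) < |(deg G v : ℝ) - avgDeg G|) := by
      simpa [hFar] using hv
    have ht : tDist G kstar v = 0 := by
      rw [tDist]
      exact max_eq_left (by rw [← hkdef]; linarith [not_lt.mp hnotfar])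
    have hwv : wt G kstar β v = 1 := by
      rw [wt, ht]
      simp
    have hmin : min (wt G kstar β u) (wt G kstar β v) = wt G kstar β u :=
      min_eq_left (hwv ▸ hw1 u)
    rw [hmin, sub_self, zero_mul]
  have hsplit : ∑ v ∈ Finset.univ.erase u,
      (min (wt G kstar β u) (wt G kstar β v) - wt G kstar β u) *
        ((if G.Adj u v then (1 : ℝ) else 0) - p)
      = ∑ v ∈ (Finset.univ.erase u).filter (fun v => v ∈ Far),
          (min (wt G kstar β u) (wt G kstar β v) - wt G kstar β u) *
            ((if G.Adj u v then (1 : ℝ) else 0) - p) := by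
    refine (Finset.sum_filter_of_ne fun v hv hne => ?_).symm
    by_contra h
    exact hne (hzero v hv h)
  rw [hsplit]
  -- bound each term by wt u
  have hterm : ∀ v,
      |(min (wt G kstar β u) (wt G kstar β v) - wt G kstar β u) *
        ((if G.Adj u v then (1 : ℝ) else 0) - p)| ≤ wt G kstar β u := by
    intro v
    rw [abs_mul]
    have ha : |min (wt G kstar β u) (wt G kstar β v) - wt G kstar β u| ≤ wt G kstar β u := by
      rw [abs_sub_comm, abs_of_nonneg (by simp [min_le_left])]
      have hmin0 : 0 ≤ min (wt G kstar β u) (wt G kstar β v) :=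
        le_min (hw0 u) (hw0 v)
      linarith
    have hb : |(if G.Adj u v then (1 : ℝ) else 0) - p| ≤ 1 := by
      split_ifs with h
      · rw [abs_of_nonneg (by linarith)]; linarith
      · rw [zero_sub, abs_neg, abs_of_nonneg hp0]; exact hp1
    calc |min (wt G kstar β u) (wt G kstar β v) - wt G kstar β u| *
          |(if G.Adj u v then (1 : ℝ) else 0) - p|
        ≤ wt G kstar β u * 1 := by
          apply mul_le_mul ha hb (abs_nonneg _) (hw0 u)
      _ = wt G kstar β u := mul_one _
  calc |∑ v ∈ (Finset.univ.erase u).filter (fun v => v ∈ Far),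
          (min (wt G kstar β u) (wt G kstar β v) - wt G kstar β u) *
            ((if G.Adj u v then (1 : ℝ) else 0) - p)|
      ≤ ∑ v ∈ (Finset.univ.erase u).filter (fun v => v ∈ Far),
          |(min (wt G kstar β u) (wt G kstar β v) - wt G kstar β u) *
            ((if G.Adj u v then (1 : ℝ) else 0) - p)| :=
        Finset.abs_sum_le_sum_abs _ _
    _ ≤ ∑ _v ∈ (Finset.univ.erase u).filter (fun v => v ∈ Far), wt G kstar β u :=
        Finset.sum_le_sum fun v _ => hterm v
    _ = ((Finset.univ.erase u).filter (fun v => v ∈ Far)).card * wt G kstar β u := by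
        rw [Finset.sum_const, nsmul_eq_mul]
    _ ≤ (k : ℝ) * wt G kstar β u := by
        apply mul_le_mul_of_nonneg_right _ (hw0 u)
        have hcard : ((Finset.univ.erase u).filter (fun v => v ∈ Far)).card ≤ k := by
          calc ((Finset.univ.erase u).filter (fun v => v ∈ Far)).card
              ≤ Far.card := Finset.card_le_card (by
                intro v hv
                exact (Finset.mem_filter.mp hv).2)
            _ = farCount G kstar k := hFarcard
            _ ≤ k := by rw [hkdef]; exact farCount_kOf_le G kstar
        exact_mod_cast hcard
    _ ≤ 2 * (k : ℝ) * wt G kstar β u := by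
        have hk0 : (0:ℝ) ≤ (k:ℝ) := Nat.cast_nonneg k
        nlinarith [hw0 u]

end
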